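/- For any A > 1 and δ > 0, there exists a one-hidden-layer ReLU network log_δ(x) = Σ_{j=1}^M a_j·ReLU(w_j x + b_j) with M = ⌈2 log(A)/δ⌉ + 1 neurons, weights satisfying |a_j| ≤ 2A, |w_j| ≤ 1, |b_j| ≤ A, such that log_δ is non-decreasing on [1/A, A] and sup_{x ∈ [1/A, A]} |log(x) − log_δ(x)| ≤ δ. -/

import Mathlib

/-- Telescoping identity for sums of hinge increments. -/
lemma relu_approx_log_tele (h x : ℝ) (X s : ℕ → ℝ) (hs0 : s 0 = 0)
    (hstep : ∀ k, s (k + 1) * (X (k + 1) - X k) = h) (m : ℕ) :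
    ∑ k ∈ Finset.range (m + 1), (s (k + 1) - s k) * (x - X k)
      = s (m + 1) * (x - X m) + m * h := by
  induction m with
  | zero => simp [hs0]
  | succ n ih =>
    rw [Finset.sum_range_succ, ih]
    push_cast
    linear_combination hstep n

/-- ReLU-network approximation of the logarithm on `[1/A, A]` with
`M = ⌈2 log A / δ⌉ + 1` neurons. -/
theorem relu_approx_log (A δ : ℝ) (hA : 1 < A) (hδ : 0 < δ) :
    ∃ a w b : Fin (⌈2 * Real.log A / δ⌉₊ + 1) → ℝ,
      (∀ j, |a j| ≤ 2 * A) ∧ (∀ j, |w j| ≤ 1) ∧ (∀ j, |b j| ≤ A) ∧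
      MonotoneOn (fun x => ∑ j, a j * max (w j * x + b j) 0) (Set.Icc (1 / A) A) ∧
      ∀ x ∈ Set.Icc (1 / A) A,
        |Real.log x - ∑ j, a j * max (w j * x + b j) 0| ≤ δ := by
  classical
  have hA0 : (0:ℝ) < A := lt_trans one_pos hA
  set L := Real.log A with hLdef
  have hL0 : 0 < L := Real.log_pos hA
  set N := ⌈2 * L / δ⌉₊ with hNdef
  have hN1 : 1 ≤ N := Nat.ceil_pos.mpr (by positivity)
  have hN0 : (0:ℝ) < N := by exact_mod_cast Nat.pos_of_ne_zero (by omega)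
  set h := 2 * L / N with hhdef
  have hh0 : 0 < h := by positivity
  have hhδ : h ≤ δ := by
    rw [hhdef, div_le_iff₀ hN0]
    have : 2 * L / δ ≤ N := Nat.le_ceil _
    calc 2 * L = (2 * L / δ) * δ := by field_simp
    _ ≤ N * δ := by apply mul_le_mul_of_nonneg_right this hδ.le
    _ = δ * N := by ring
  have hNh : (N:ℝ) * h = 2 * L := by rw [hhdef]; field_simp
  set X : ℕ → ℝ := fun k => Real.exp (k * h - L) with hXdef
  have hX0 : X 0 = 1 / A := by
    simp [hXdef, hLdef, Real.exp_neg, Real.exp_log hA0, one_div]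
  have hXpos : ∀ k, 0 < X k := fun k => Real.exp_pos _
  have hXmono : ∀ {i j : ℕ}, i ≤ j → X i ≤ X j := by
    intro i j hij
    apply Real.exp_le_exp.mpr
    have : (i:ℝ) ≤ j := by exact_mod_cast hij
    nlinarith
  have hXgap : ∀ k, X k * h ≤ X (k + 1) - X k := by
    intro k
    have hxk : X (k + 1) = X k * Real.exp h := by
      rw [show X (k+1) = Real.exp ((k:ℝ) * h - L + h) by
        simp only [hXdef]; congr 1; push_cast; ring, Real.exp_add]
    rw [hxk]
    have he : h + 1 ≤ Real.exp h := Real.add_one_le_exp h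
    nlinarith [hXpos k]
  have hXgap0 : ∀ k, 0 < X (k + 1) - X k := fun k =>
    lt_of_lt_of_le (mul_pos (hXpos k) hh0) (hXgap k)
  set s : ℕ → ℝ := fun k => match k with
    | 0 => 0
    | k + 1 => h / (X (k + 1) - X k) with hsdef
  have hs0 : s 0 = 0 := rfl
  have hstep : ∀ k, s (k + 1) * (X (k + 1) - X k) = h := by
    intro k
    exact div_mul_cancel₀ _ (ne_of_gt (hXgap0 k))
  have hspos : ∀ k, 0 < s (k + 1) := fun k => div_pos hh0 (hXgap0 k)
  have hXA : ∀ k ≤ N, X k ≤ A := by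
    intro k hk
    have : (k:ℝ) * h ≤ N * h := by
      apply mul_le_mul_of_nonneg_right _ hh0.le
      exact_mod_cast hk
    calc X k = Real.exp (k * h - L) := rfl
    _ ≤ Real.exp L := Real.exp_le_exp.mpr (by rw [hNh] at this; linarith)
    _ = A := Real.exp_log hA0
  have hsA : ∀ k, s k ≤ A := by
    intro k
    match k with
    | 0 => exact le_of_lt (by simpa [hs0] using hA0)
    | k + 1 =>
      have h1 : s (k + 1) ≤ 1 / X k := by
        rw [hsdef]
        rw [div_le_div_iff₀ (hXgap0 k) (hXpos k)]
        have := hXgap k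
        nlinarith [hXpos k]
      have h2 : 1 / X k ≤ 1 / X 0 := by
        apply one_div_le_one_div_of_le (hXpos 0) (hXmono (Nat.zero_le k))
      have h3 : 1 / X 0 = A := by rw [hX0]; field_simp
      linarith
  have hsnn : ∀ k, 0 ≤ s k := by
    intro k
    match k with
    | 0 => simp [hs0]
    | k + 1 => exact (hspos k).le
  -- evaluation of the network on the interval
  set mI : ℝ → ℕ := fun x => min ⌊(Real.log x + L) / h⌋₊ (N - 1) with hmdef
  have key : ∀ x ∈ Set.Icc (1 / A) A,
      X (mI x) ≤ x ∧ x ≤ X (mI x + 1) ∧ mI x + 1 ≤ N ∧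
      (∑ j : Fin (N + 1), (if ((j:ℕ) = N) then (-1:ℝ) else s ((j:ℕ) + 1) - s (j:ℕ)) *
          max ((if ((j:ℕ) = N) then (0:ℝ) else 1) * x + (if ((j:ℕ) = N) then L else -X (j:ℕ))) 0)
        = s (mI x + 1) * (x - X (mI x)) + (mI x) * h - L := by
    intro x hx
    obtain ⟨hx1, hx2⟩ := hx
    have hx0 : 0 < x := lt_of_lt_of_le (by positivity) hx1
    have hlog1 : -L ≤ Real.log x := by
      have h1 : Real.log (1 / A) ≤ Real.log x := Real.log_le_log (by positivity) hx1
      rwa [one_div, Real.log_inv] at h1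
    have hlog2 : Real.log x ≤ L := Real.log_le_log hx0 hx2
    set t := (Real.log x + L) / h with htdef
    have ht0 : 0 ≤ t := by
      apply div_nonneg _ hh0.le
      linarith
    have htN : t ≤ N := by
      rw [htdef, div_le_iff₀ hh0, hNh]
      linarith
    set m := mI x with hm
    have hmN : m + 1 ≤ N := by
      have : m ≤ N - 1 := min_le_right _ _
      omega
    have hmt : (m:ℝ) ≤ t := by
      have h1 : m ≤ ⌊t⌋₊ := min_le_left _ _
      calc (m:ℝ) ≤ (⌊t⌋₊ : ℝ) := by exact_mod_cast h1
      _ ≤ t := Nat.floor_le ht0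
    have htm : t ≤ (m:ℝ) + 1 := by
      have h1 : m + 1 = min (⌊t⌋₊ + 1) N := by
        rw [hm, hmdef]
        simp only []
        rcases le_or_gt ⌊t⌋₊ (N - 1) with hc | hc
        · rw [min_eq_left hc, min_eq_left (show ⌊t⌋₊ + 1 ≤ N by omega)]
        · rw [min_eq_right (show N - 1 ≤ ⌊t⌋₊ by omega),
            min_eq_right (show N ≤ ⌊t⌋₊ + 1 by omega)]
          omega
      have h2 : t ≤ (⌊t⌋₊ : ℝ) + 1 := (Nat.lt_floor_add_one t).le
      have h3 : ((m:ℕ) + 1 : ℝ) = min ((⌊t⌋₊ : ℝ) + 1) (N:ℝ) := by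
        exact_mod_cast h1
      rw [h3]
      exact le_min h2 htN
    have hth : t * h = Real.log x + L := by
      rw [htdef]; field_simp
    have hXmx : X m ≤ x := by
      rw [hXdef]
      simp only []
      rw [← Real.le_log_iff_exp_le hx0]
      have : (m:ℝ) * h ≤ t * h := mul_le_mul_of_nonneg_right hmt hh0.le
      rw [hth] at this
      linarith
    have hxXm : x ≤ X (m + 1) := by
      rw [hXdef]
      simp only []
      rw [← Real.log_le_iff_le_exp hx0]
      have : t * h ≤ ((m:ℝ) + 1) * h := mul_le_mul_of_nonneg_right htm hh0.le
      rw [hth] at this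
      push_cast
      linarith
    refine ⟨hXmx, hxXm, hmN, ?_⟩
    have hG := Fin.sum_univ_eq_sum_range (fun k =>
      (if (k = N) then (-1:ℝ) else s (k + 1) - s k) *
        max ((if (k = N) then (0:ℝ) else 1) * x + (if (k = N) then L else -X k)) 0) (N + 1)
    rw [hG, Finset.sum_range_succ]
    have hGN : (if (N = N) then (-1:ℝ) else s (N + 1) - s N) *
        max ((if (N = N) then (0:ℝ) else 1) * x + (if (N = N) then L else -X N)) 0 = -L := by
      simp [max_eq_left hL0.le]
    rw [hGN]
    have hcongr : ∑ k ∈ Finset.range N,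
        (if (k = N) then (-1:ℝ) else s (k + 1) - s k) *
          max ((if (k = N) then (0:ℝ) else 1) * x + (if (k = N) then L else -X k)) 0
        = ∑ k ∈ Finset.range N, (s (k + 1) - s k) * max (x - X k) 0 := by
      apply Finset.sum_congr rfl
      intro k hk
      have hkN : k ≠ N := Nat.ne_of_lt (Finset.mem_range.mp hk)
      rw [if_neg hkN, if_neg hkN, if_neg hkN, one_mul, ← sub_eq_add_neg]
    rw [hcongr]
    have hsub : ∑ k ∈ Finset.range N, (s (k + 1) - s k) * max (x - X k) 0
        = ∑ k ∈ Finset.range (m + 1), (s (k + 1) - s k) * max (x - X k) 0 := by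
      refine (Finset.sum_subset ?_ ?_).symm
      · exact Finset.range_subset_range.mpr hmN
      · intro k _ hk2
        have hk3 : m + 1 ≤ k := by
          by_contra hc
          exact hk2 (Finset.mem_range.mpr (by omega))
        have : x ≤ X k := le_trans hxXm (hXmono hk3)
        rw [max_eq_right (by linarith), mul_zero]
    rw [hsub]
    have hmax : ∑ k ∈ Finset.range (m + 1), (s (k + 1) - s k) * max (x - X k) 0
        = ∑ k ∈ Finset.range (m + 1), (s (k + 1) - s k) * (x - X k) := by
      apply Finset.sum_congr rfl
      intro k hk
      have hk2 : k ≤ m := Nat.le_of_lt_succ (Finset.mem_range.mp hk)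
      have : X k ≤ x := le_trans (hXmono hk2) hXmx
      rw [max_eq_left (by linarith)]
    rw [hmax, relu_approx_log_tele h x X s hs0 hstep m]
    ring
  refine ⟨fun j => if (j:ℕ) = N then -1 else s ((j:ℕ) + 1) - s (j:ℕ),
    fun j => if (j:ℕ) = N then 0 else 1,
    fun j => if (j:ℕ) = N then L else -X (j:ℕ), ?_, ?_, ?_, ?_, ?_⟩
  · intro j
    by_cases hj : (j:ℕ) = N <;> simp [hj]
    · linarith
    · rw [abs_sub_le_iff]
      constructor <;>
        linarith [hsnn ((j:ℕ) + 1), hsnn (j:ℕ), hsA ((j:ℕ) + 1), hsA (j:ℕ)]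
  · intro j
    by_cases hj : (j:ℕ) = N <;> simp [hj]
  · intro j
    by_cases hj : (j:ℕ) = N <;> simp [hj]
    · rw [abs_of_pos hL0]
      linarith [Real.log_le_sub_one_of_pos hA0]
    · rw [abs_of_pos (hXpos _)]
      exact hXA _ (Nat.le_of_lt_succ j.isLt)
  · -- monotonicity
    intro x hx y hy hxy
    obtain ⟨hX1, hX2, hNx, hF1⟩ := key x hx
    obtain ⟨hY1, hY2, hNy, hF2⟩ := key y hy
    simp only []
    rw [hF1, hF2]
    have hx0 : 0 < x := lt_of_lt_of_le (by positivity) hx.1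
    have hmm : mI x ≤ mI y := by
      apply min_le_min _ le_rfl
      apply Nat.floor_le_floor
      gcongr
    rcases eq_or_lt_of_le hmm with he | hlt
    · rw [← he]
      have := mul_le_mul_of_nonneg_left (sub_le_sub_right hxy (X (mI x))) (hspos (mI x)).le
      linarith
    · have e1 : s (mI x + 1) * (x - X (mI x)) ≤ h := by
        calc s (mI x + 1) * (x - X (mI x)) ≤ s (mI x + 1) * (X (mI x + 1) - X (mI x)) :=
          mul_le_mul_of_nonneg_left (by linarith) (hspos _).le
        _ = h := hstep _
      have e2 : 0 ≤ s (mI y + 1) * (y - X (mI y)) := mul_nonneg (hspos _).le (by linarith)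
      have e3 : ((mI x : ℝ) + 1) ≤ (mI y : ℝ) := by exact_mod_cast hlt
      have e4 : ((mI x : ℝ) + 1) * h ≤ (mI y : ℝ) * h := mul_le_mul_of_nonneg_right e3 hh0.le
      have e5 : ((mI x : ℝ) + 1) * h = (mI x : ℝ) * h + h := by ring
      linarith
  · -- error bound
    intro x hx
    obtain ⟨hX1, hX2, hNx, hF⟩ := key x hx
    simp only []
    rw [hF]
    have hx0 : 0 < x := lt_of_lt_of_le (by positivity) hx.1
    have hl1 : (mI x : ℝ) * h - L ≤ Real.log x := by
      have h1 := Real.log_le_log (hXpos (mI x)) hX1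
      simp only [hXdef] at h1
      rwa [Real.log_exp] at h1
    have hl2 : Real.log x ≤ ((mI x : ℝ) + 1) * h - L := by
      have h1 := Real.log_le_log hx0 hX2
      simp only [hXdef] at h1
      rw [Real.log_exp] at h1
      push_cast at h1
      linarith
    have e1 : 0 ≤ s (mI x + 1) * (x - X (mI x)) := mul_nonneg (hspos _).le (by linarith)
    have e2 : s (mI x + 1) * (x - X (mI x)) ≤ h := by
      calc s (mI x + 1) * (x - X (mI x)) ≤ s (mI x + 1) * (X (mI x + 1) - X (mI x)) :=
        mul_le_mul_of_nonneg_left (by linarith) (hspos _).le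
      _ = h := hstep _
    rw [abs_le]
    constructor <;> linarith
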